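/- Lindenbaum lemma for H_DPL: every consistent set of DPL formulas extends to a saturated (equivalently, maximally consistent) set. -/

import Mathlib

open MeasureTheory
open scoped ENNReal

/-- Formulas of dynamic probability logic. -/
inductive DPLF : Type
  | var : ℕ → DPLF
  | neg : DPLF → DPLF
  | conj : DPLF → DPLF → DPLF
  | prob : ℚ → DPLF → DPLF
  | next : DPLF → DPLF
deriving DecidableEq

namespace DPLF

def falsum : DPLF := (var 0).conj (var 0).neg
def impl (φ ψ : DPLF) : DPLF := (φ.conj ψ.neg).neg
def disj (φ ψ : DPLF) : DPLF := (φ.neg.conj ψ.neg).neg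
def iffF (φ ψ : DPLF) : DPLF := (φ.impl ψ).conj (ψ.impl φ)

/-- n-fold application of the next operator. -/
def nextn : ℕ → DPLF → DPLF
  | 0, φ => φ
  | n+1, φ => (nextn n φ).next

/-- Iterated probability operators `L_{r₁ … r_k}`. -/
def probs : List ℚ → DPLF → DPLF
  | [], φ => φ
  | r :: rs, φ => prob r (probs rs φ)

/-- Propositional tautology: true under every Boolean valuation respecting ¬ and ∧. -/
def IsTautology (φ : DPLF) : Prop :=
  ∀ v : DPLF → Bool, (∀ ψ, v ψ.neg = !v ψ) →
    (∀ ψ χ, v (ψ.conj χ) = (v ψ && v χ)) → v φ = true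

/-- Theoremhood in the Hilbert system `H⁻_DPL`. -/
inductive Hm : DPLF → Prop
  | taut {φ : DPLF} : IsTautology φ → Hm φ
  | fa1 : Hm (prob 0 falsum)
  | fa2 {φ : DPLF} {r s : ℚ} : 0 ≤ r → r ≤ 1 → 0 ≤ s → s ≤ 1 → 1 < r + s →
      Hm (impl (prob r φ.neg) (prob s φ).neg)
  | fa3 {φ ψ : DPLF} {r s : ℚ} : 0 ≤ r → 0 ≤ s → r + s ≤ 1 →
      Hm (impl ((prob r (φ.conj ψ)).conj (prob s (φ.conj ψ.neg))) (prob (r+s) φ))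
  | fa4 {φ ψ : DPLF} {r s : ℚ} : 0 ≤ r → 0 ≤ s → r + s ≤ 1 →
      Hm (impl ((prob r (φ.conj ψ)).neg.conj (prob s (φ.conj ψ.neg)).neg) (prob (r+s) φ).neg)
  | mono {φ ψ : DPLF} {r : ℚ} : 0 ≤ r → r ≤ 1 →
      Hm (impl (prob 1 (impl φ ψ)) (impl (prob r φ) (prob r ψ)))
  | func {φ : DPLF} : Hm (iffF φ.neg.next φ.next.neg)
  | conjNext {φ ψ : DPLF} : Hm (iffF (φ.conj ψ).next (φ.next.conj ψ.next))
  | mp {φ ψ : DPLF} : Hm (impl φ ψ) → Hm φ → Hm ψ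
  | arch {φ ψ : DPLF} {n : ℕ} {r : ℚ} : 0 ≤ r → r ≤ 1 →
      (∀ s : ℚ, 0 ≤ s → s < r → Hm (impl ψ (nextn n (prob s φ)))) →
      Hm (impl ψ (nextn n (prob r φ)))
  | necL {φ : DPLF} : Hm φ → Hm (prob 1 φ)
  | necNext {φ : DPLF} : Hm φ → Hm φ.next

/-- Theoremhood in the Hilbert system `H_DPL` (with the generalized Archimedean rule). -/
inductive Hg : DPLF → Prop
  | taut {φ : DPLF} : IsTautology φ → Hg φ
  | fa1 : Hg (prob 0 falsum)
  | fa2 {φ : DPLF} {r s : ℚ} : 0 ≤ r → r ≤ 1 → 0 ≤ s → s ≤ 1 → 1 < r + s →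
      Hg (impl (prob r φ.neg) (prob s φ).neg)
  | fa3 {φ ψ : DPLF} {r s : ℚ} : 0 ≤ r → 0 ≤ s → r + s ≤ 1 →
      Hg (impl ((prob r (φ.conj ψ)).conj (prob s (φ.conj ψ.neg))) (prob (r+s) φ))
  | fa4 {φ ψ : DPLF} {r s : ℚ} : 0 ≤ r → 0 ≤ s → r + s ≤ 1 →
      Hg (impl ((prob r (φ.conj ψ)).neg.conj (prob s (φ.conj ψ.neg)).neg) (prob (r+s) φ).neg)
  | mono {φ ψ : DPLF} {r : ℚ} : 0 ≤ r → r ≤ 1 →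
      Hg (impl (prob 1 (impl φ ψ)) (impl (prob r φ) (prob r ψ)))
  | func {φ : DPLF} : Hg (iffF φ.neg.next φ.next.neg)
  | conjNext {φ ψ : DPLF} : Hg (iffF (φ.conj ψ).next (φ.next.conj ψ.next))
  | mp {φ ψ : DPLF} : Hg (impl φ ψ) → Hg φ → Hg ψ
  | garch {φ ψ : DPLF} {n : ℕ} {rs : List ℚ} {r : ℚ} : 0 ≤ r → r ≤ 1 →
      (∀ q ∈ rs, 0 ≤ q ∧ q ≤ 1) →
      (∀ s : ℚ, 0 ≤ s → s < r → Hg (impl ψ (nextn n (probs rs (prob s φ))))) →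
      Hg (impl ψ (nextn n (probs rs (prob r φ))))
  | necL {φ : DPLF} : Hg φ → Hg (prob 1 φ)
  | necNext {φ : DPLF} : Hg φ → Hg φ.next

/-- Derivability from assumptions in `H⁻_DPL` (no necessitation on assumptions). -/
inductive HmFrom (Γ : Set DPLF) : DPLF → Prop
  | assum {φ : DPLF} : φ ∈ Γ → HmFrom Γ φ
  | thm {φ : DPLF} : Hm φ → HmFrom Γ φ
  | mp {φ ψ : DPLF} : HmFrom Γ (impl φ ψ) → HmFrom Γ φ → HmFrom Γ ψ
  | arch {φ ψ : DPLF} {n : ℕ} {r : ℚ} : 0 ≤ r → r ≤ 1 →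
      (∀ s : ℚ, 0 ≤ s → s < r → HmFrom Γ (impl ψ (nextn n (prob s φ)))) →
      HmFrom Γ (impl ψ (nextn n (prob r φ)))

/-- Derivability from assumptions in `H_DPL` (no necessitation on assumptions). -/
inductive HgFrom (Γ : Set DPLF) : DPLF → Prop
  | assum {φ : DPLF} : φ ∈ Γ → HgFrom Γ φ
  | thm {φ : DPLF} : Hg φ → HgFrom Γ φ
  | mp {φ ψ : DPLF} : HgFrom Γ (impl φ ψ) → HgFrom Γ φ → HgFrom Γ ψ
  | garch {φ ψ : DPLF} {n : ℕ} {rs : List ℚ} {r : ℚ} : 0 ≤ r → r ≤ 1 →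
      (∀ q ∈ rs, 0 ≤ q ∧ q ≤ 1) →
      (∀ s : ℚ, 0 ≤ s → s < r → HgFrom Γ (impl ψ (nextn n (probs rs (prob s φ))))) →
      HgFrom Γ (impl ψ (nextn n (probs rs (prob r φ))))

/-- Consistency of a set of formulas in `H_DPL`. -/
def GConsistent (Γ : Set DPLF) : Prop := ¬ HgFrom Γ falsum

/-- Consistency of a set of formulas in `H⁻_DPL`. -/
def MConsistent (Γ : Set DPLF) : Prop := ¬ HmFrom Γ falsum

/-- Saturated sets of formulas. -/
structure Saturated (w : Set DPLF) : Prop where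
  fincon : ∀ Γ : Set DPLF, Γ ⊆ w → Γ.Finite → GConsistent Γ
  negcomplete : ∀ φ : DPLF, φ ∈ w ∨ φ.neg ∈ w
  archProp : ∀ (φ : DPLF) (n : ℕ) (rs : List ℚ) (r : ℚ), 0 ≤ r → r ≤ 1 →
    (∀ q ∈ rs, 0 ≤ q ∧ q ≤ 1) →
    (∀ s : ℚ, 0 ≤ s → s < r → nextn n (probs rs (prob s φ)) ∈ w) →
    nextn n (probs rs (prob r φ)) ∈ w

/-- The canonical space: all saturated sets. -/
def Omegac : Type := {w : Set DPLF // Saturated w}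

/-- The basic set `[φ]` of saturated sets containing `φ`. -/
def box (φ : DPLF) : Set Omegac := {w | φ ∈ w.1}

/-- The canonical base `B_c`. -/
def Bc : Set (Set Omegac) := {A | ∃ φ : DPLF, A = box φ}

/-- Dynamic Markov model. -/
structure DMM where
  World : Type
  σ : MeasurableSpace World
  T : World → @Measure World σ
  T_prob : ∀ w, IsProbabilityMeasure (T w)
  T_meas : ∀ A : Set World, MeasurableSet[σ] A →
    @Measurable World ℝ≥0∞ σ _ (fun w => T w A)
  f : World → World
  f_meas : @Measurable World World σ σ f
  v : ℕ → Set World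
  v_meas : ∀ p : ℕ, MeasurableSet[σ] (v p)

/-- Satisfaction in a dynamic Markov model. -/
def Sat (M : DMM) : DPLF → M.World → Prop
  | var p, w => w ∈ M.v p
  | neg φ, w => ¬ Sat M φ w
  | conj φ ψ, w => Sat M φ w ∧ Sat M ψ w
  | prob r φ, w => ENNReal.ofReal (r : ℝ) ≤ M.T w {u | Sat M φ u}
  | next φ, w => Sat M φ (M.f w)

end DPLF
namespace DPLF

/-! ### Auxiliary results for the Lindenbaum lemma -/

theorem HgFrom.mono {Γ Δ : Set DPLF} (h : Γ ⊆ Δ) {φ : DPLF} (hφ : HgFrom Γ φ) :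
    HgFrom Δ φ := by
  induction hφ with
  | assum hm => exact .assum (h hm)
  | thm ht => exact .thm ht
  | mp _ _ ih1 ih2 => exact .mp ih1 ih2
  | garch hr0 hr1 hrs _ ih => exact .garch hr0 hr1 hrs ih

theorem hg_id (φ : DPLF) : Hg (impl φ φ) :=
  Hg.taut (by intro v hn hc; simp only [impl, hn, hc]; cases v φ <;> rfl)

theorem hg_k (φ ψ : DPLF) : Hg (impl φ (impl ψ φ)) :=
  Hg.taut (by
    intro v hn hc; simp only [impl, hn, hc]
    cases v φ <;> cases v ψ <;> rfl)

theorem hg_s (φ ψ χ : DPLF) :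
    Hg (impl (impl φ (impl ψ χ)) (impl (impl φ ψ) (impl φ χ))) :=
  Hg.taut (by
    intro v hn hc; simp only [impl, hn, hc]
    cases v φ <;> cases v ψ <;> cases v χ <;> rfl)

theorem hg_curry (φ ψ χ : DPLF) :
    Hg (impl (impl φ (impl ψ χ)) (impl (φ.conj ψ) χ)) :=
  Hg.taut (by
    intro v hn hc; simp only [impl, hn, hc]
    cases v φ <;> cases v ψ <;> cases v χ <;> rfl)

theorem hg_uncurry (φ ψ χ : DPLF) :
    Hg (impl (impl (φ.conj ψ) χ) (impl φ (impl ψ χ))) :=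
  Hg.taut (by
    intro v hn hc; simp only [impl, hn, hc]
    cases v φ <;> cases v ψ <;> cases v χ <;> rfl)

theorem hg_dne (φ : DPLF) : Hg (impl (impl φ.neg falsum) φ) :=
  Hg.taut (by
    intro v hn hc; simp only [impl, falsum, hn, hc]
    cases v φ <;> cases v (var 0) <;> rfl)

theorem hg_top : Hg falsum.neg :=
  Hg.taut (by
    intro v hn hc; simp only [falsum, hn, hc]
    cases v (var 0) <;> rfl)

theorem hg_pair_bot (φ : DPLF) : Hg (impl φ (impl φ.neg falsum)) :=
  Hg.taut (by
    intro v hn hc; simp only [impl, falsum, hn, hc]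
    cases v φ <;> cases v (var 0) <;> rfl)

theorem hg_cases (φ : DPLF) :
    Hg (impl (impl φ falsum) (impl (impl φ.neg falsum) falsum)) :=
  Hg.taut (by
    intro v hn hc; simp only [impl, falsum, hn, hc]
    cases v φ <;> cases v (var 0) <;> rfl)

/-- Deduction theorem for `HgFrom`. -/
theorem HgFrom.ded {Γ : Set DPLF} {φ ψ : DPLF} (h : HgFrom (insert φ Γ) ψ) :
    HgFrom Γ (impl φ ψ) := by
  induction h with
  | @assum χ hm =>
    rcases (Set.mem_insert_iff.mp hm) with rfl | hm
    · exact .thm (hg_id _)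
    · exact .mp (.thm (hg_k _ _)) (.assum hm)
  | thm ht => exact .mp (.thm (hg_k _ _)) (.thm ht)
  | mp _ _ ih1 ih2 => exact .mp (.mp (.thm (hg_s _ _ _)) ih1) ih2
  | @garch θ ρ n rs r hr0 hr1 hrs _ ih =>
    have h1 : ∀ s : ℚ, 0 ≤ s → s < r →
        HgFrom Γ (impl (φ.conj ρ) (nextn n (probs rs (prob s θ)))) :=
      fun s hs1 hs2 => .mp (.thm (hg_curry _ _ _)) (ih s hs1 hs2)
    exact .mp (.thm (hg_uncurry _ _ _)) (HgFrom.garch hr0 hr1 hrs h1)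

theorem incon_of_mem_neg {Δ : Set DPLF} {φ : DPLF} (h1 : φ ∈ Δ) (h2 : φ.neg ∈ Δ) :
    HgFrom Δ falsum :=
  .mp (.mp (.thm (hg_pair_bot φ)) (.assum h1)) (.assum h2)

theorem cons_insert_or {Δ : Set DPLF} (hΔ : GConsistent Δ) (φ : DPLF) :
    GConsistent (insert φ Δ) ∨ GConsistent (insert φ.neg Δ) := by
  by_contra h
  push_neg at h
  obtain ⟨h1, h2⟩ := h
  rw [GConsistent, not_not] at h1 h2
  exact hΔ (.mp (.mp (.thm (hg_cases φ)) h1.ded) h2.ded)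

theorem witness_exists {Δ : Set DPLF} (hΔ : GConsistent Δ) {θ : DPLF} {n : ℕ}
    {rs : List ℚ} {r : ℚ} (hr0 : 0 ≤ r) (hr1 : r ≤ 1)
    (hrs : ∀ q ∈ rs, 0 ≤ q ∧ q ≤ 1)
    (hin : ¬ GConsistent (insert (nextn n (probs rs (prob r θ))) Δ)) :
    ∃ s : ℚ, 0 ≤ s ∧ s < r ∧
      GConsistent (insert (nextn n (probs rs (prob s θ))).neg
        (insert (nextn n (probs rs (prob r θ))).neg Δ)) := by
  by_contra h
  push_neg at h
  have hstep : ∀ s : ℚ, 0 ≤ s → s < r →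
      HgFrom (insert (nextn n (probs rs (prob r θ))).neg Δ)
        (impl falsum.neg (nextn n (probs rs (prob s θ)))) := by
    intro s hs1 hs2
    have h1 : HgFrom (insert (nextn n (probs rs (prob s θ))).neg
        (insert (nextn n (probs rs (prob r θ))).neg Δ)) falsum := by
      have := h s hs1 hs2
      rwa [GConsistent, not_not] at this
    exact .mp (.thm (hg_k _ _)) (.mp (.thm (hg_dne _)) h1.ded)
  have hG := HgFrom.garch hr0 hr1 hrs hstep
  have hξ : HgFrom (insert (nextn n (probs rs (prob r θ))).neg Δ)
      (nextn n (probs rs (prob r θ))) := .mp hG (.thm hg_top)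
  have hbot : HgFrom (insert (nextn n (probs rs (prob r θ))).neg Δ) falsum :=
    .mp (.mp (.thm (hg_pair_bot _)) hξ) (.assum (Set.mem_insert _ _))
  rw [GConsistent, not_not] at hin
  exact hΔ (.mp (.mp (.thm (hg_cases _)) hin.ded) hbot.ded)

/-! ### Countability of formulas -/

private def code : DPLF → ℕ
  | var n => Nat.pair 0 n
  | neg φ => Nat.pair 1 (code φ)
  | conj φ ψ => Nat.pair 2 (Nat.pair (code φ) (code ψ))
  | prob r φ => Nat.pair 3 (Nat.pair (Encodable.encode r) (code φ))
  | next φ => Nat.pair 4 (code φ)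

private theorem code_inj : ∀ a b : DPLF, code a = code b → a = b := by
  intro a
  induction a with
  | var m =>
    intro b h
    cases b <;> simp [code, Nat.pair_eq_pair] at h
    rw [h]
  | neg φ ih =>
    intro b h
    cases b <;> simp [code, Nat.pair_eq_pair] at h
    rw [ih _ h]
  | conj φ ψ ih1 ih2 =>
    intro b h
    cases b <;> simp [code, Nat.pair_eq_pair] at h
    rw [ih1 _ h.1, ih2 _ h.2]
  | prob r φ ih =>
    intro b h
    cases b <;> simp [code, Nat.pair_eq_pair, Encodable.encode_inj] at h
    rw [h.1, ih _ h.2]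
  | next φ ih =>
    intro b h
    cases b <;> simp [code, Nat.pair_eq_pair] at h
    rw [ih _ h]

instance : Countable DPLF := ⟨⟨code, fun {a b} h => code_inj a b h⟩⟩

instance : Nonempty DPLF := ⟨var 0⟩

/-! ### The construction -/

open scoped Classical in
/-- One step of the Lindenbaum construction. -/
noncomputable def lstep (t : DPLF ⊕ (ℕ × List ℚ × ℚ × DPLF)) (Δ : Set DPLF) :
    Set DPLF :=
  match t with
  | Sum.inl φ => if GConsistent (insert φ Δ) then insert φ Δ else insert φ.neg Δ
  | Sum.inr (n, rs, r, θ) =>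
    if GConsistent (insert (nextn n (probs rs (prob r θ))) Δ) then
      insert (nextn n (probs rs (prob r θ))) Δ
    else if h : ∃ s : ℚ, 0 ≤ s ∧ s < r ∧
        GConsistent (insert (nextn n (probs rs (prob s θ))).neg
          (insert (nextn n (probs rs (prob r θ))).neg Δ)) then
      insert (nextn n (probs rs (prob h.choose θ))).neg
        (insert (nextn n (probs rs (prob r θ))).neg Δ)
    else Δ

open scoped Classical in
theorem lstep_inl (φ : DPLF) (Δ : Set DPLF) : lstep (Sum.inl φ) Δ =
    if GConsistent (insert φ Δ) then insert φ Δ else insert φ.neg Δ := rfl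

open scoped Classical in
theorem lstep_inr (n : ℕ) (rs : List ℚ) (r : ℚ) (θ : DPLF) (Δ : Set DPLF) :
    lstep (Sum.inr (n, rs, r, θ)) Δ =
    (if GConsistent (insert (nextn n (probs rs (prob r θ))) Δ) then
      insert (nextn n (probs rs (prob r θ))) Δ
    else if h : ∃ s : ℚ, 0 ≤ s ∧ s < r ∧
        GConsistent (insert (nextn n (probs rs (prob s θ))).neg
          (insert (nextn n (probs rs (prob r θ))).neg Δ)) then
      insert (nextn n (probs rs (prob h.choose θ))).neg
        (insert (nextn n (probs rs (prob r θ))).neg Δ)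
    else Δ) := rfl

theorem subset_lstep (t : DPLF ⊕ (ℕ × List ℚ × ℚ × DPLF)) (Δ : Set DPLF) :
    Δ ⊆ lstep t Δ := by
  classical
  rcases t with φ | ⟨n, rs, r, θ⟩
  · rw [lstep_inl]
    split_ifs <;> exact Set.subset_insert _ _
  · rw [lstep_inr]
    split_ifs
    · exact Set.subset_insert _ _
    · exact (Set.subset_insert _ _).trans (Set.subset_insert _ _)
    · exact subset_rfl

theorem cons_lstep {Δ : Set DPLF} (hΔ : GConsistent Δ)
    (t : DPLF ⊕ (ℕ × List ℚ × ℚ × DPLF)) : GConsistent (lstep t Δ) := by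
  classical
  rcases t with φ | ⟨n, rs, r, θ⟩
  · rw [lstep_inl]
    split_ifs with h1
    · exact h1
    · rcases cons_insert_or hΔ φ with h | h
      · exact absurd h h1
      · exact h
  · rw [lstep_inr]
    split_ifs with h1 h2
    · exact h1
    · exact h2.choose_spec.2.2
    · exact hΔ

/-- The Lindenbaum chain. -/
noncomputable def lseq (Γ : Set DPLF) (e : ℕ → DPLF ⊕ (ℕ × List ℚ × ℚ × DPLF)) :
    ℕ → Set DPLF
  | 0 => Γ
  | k+1 => lstep (e k) (lseq Γ e k)

theorem lseq_cons {Γ : Set DPLF} (hΓ : GConsistent Γ)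
    (e : ℕ → DPLF ⊕ (ℕ × List ℚ × ℚ × DPLF)) :
    ∀ k, GConsistent (lseq Γ e k)
  | 0 => hΓ
  | k+1 => cons_lstep (lseq_cons hΓ e k) _

theorem lseq_mono (Γ : Set DPLF) (e : ℕ → DPLF ⊕ (ℕ × List ℚ × ℚ × DPLF))
    {k m : ℕ} (h : k ≤ m) : lseq Γ e k ⊆ lseq Γ e m := by
  induction m with
  | zero => rw [Nat.le_zero.mp h]
  | succ m ih =>
    rcases Nat.lt_or_ge k (m+1) with h' | h'
    · exact (ih (Nat.lt_succ_iff.mp h')).trans (subset_lstep _ _)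
    · rw [Nat.le_antisymm h h']

theorem finite_subset_lseq (Γ : Set DPLF) (e : ℕ → DPLF ⊕ (ℕ × List ℚ × ℚ × DPLF))
    {s : Set DPLF} (hfin : s.Finite) :
    s ⊆ (⋃ k, lseq Γ e k) → ∃ m, s ⊆ lseq Γ e m := by
  refine Set.Finite.induction_on (motive := fun s _ => s ⊆ (⋃ k, lseq Γ e k) → ∃ m, s ⊆ lseq Γ e m) s hfin (fun _ => ⟨0, Set.empty_subset _⟩) ?_
  intro a t _ _ ih hsub
  obtain ⟨m1, hm1⟩ := ih ((Set.subset_insert a t).trans hsub)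
  obtain ⟨m2, hm2⟩ := Set.mem_iUnion.mp (hsub (Set.mem_insert a t))
  exact ⟨max m1 m2, Set.insert_subset (lseq_mono Γ e (le_max_right m1 m2) hm2)
    (hm1.trans (lseq_mono Γ e (le_max_left m1 m2)))⟩

end DPLF

open DPLF in
/-- Lindenbaum lemma for H_DPL. -/
theorem stmt8 (Γ : Set DPLF) (hΓ : GConsistent Γ) :
    ∃ w : Set DPLF, Γ ⊆ w ∧ Saturated w := by
  classical
  obtain ⟨e, he⟩ := exists_surjective_nat (DPLF ⊕ (ℕ × List ℚ × ℚ × DPLF))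
  refine ⟨⋃ k, lseq Γ e k, Set.subset_iUnion (fun k => lseq Γ e k) 0, ?_, ?_, ?_⟩
  · -- finite consistency
    intro Δ hsub hfin
    obtain ⟨m, hm⟩ := finite_subset_lseq Γ e hfin hsub
    intro hbot
    exact lseq_cons hΓ e m (HgFrom.mono hm hbot)
  · -- negation completeness
    intro φ
    obtain ⟨k, hk⟩ := he (Sum.inl φ)
    have h1 : lseq Γ e (k+1) = lstep (e k) (lseq Γ e k) := rfl
    rw [hk, lstep_inl] at h1
    by_cases hc : GConsistent (insert φ (lseq Γ e k))
    · rw [if_pos hc] at h1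
      exact Or.inl (Set.mem_iUnion.mpr ⟨k+1, h1 ▸ Set.mem_insert _ _⟩)
    · rw [if_neg hc] at h1
      exact Or.inr (Set.mem_iUnion.mpr ⟨k+1, h1 ▸ Set.mem_insert _ _⟩)
  · -- Archimedean property
    intro φ n rs r hr0 hr1 hrs hall
    obtain ⟨k, hk⟩ := he (Sum.inr (n, rs, r, φ))
    have hcons := lseq_cons hΓ e k
    have h1 : lseq Γ e (k+1) = lstep (e k) (lseq Γ e k) := rfl
    rw [hk, lstep_inr] at h1
    by_cases hc : GConsistent (insert (nextn n (probs rs (prob r φ))) (lseq Γ e k))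
    · rw [if_pos hc] at h1
      exact Set.mem_iUnion.mpr ⟨k+1, h1 ▸ Set.mem_insert _ _⟩
    · have hex := witness_exists hcons hr0 hr1 hrs hc
      rw [if_neg hc, dif_pos hex] at h1
      obtain ⟨hs0, hs1, -⟩ := hex.choose_spec
      have hw : (nextn n (probs rs (prob hex.choose φ))).neg ∈ lseq Γ e (k+1) :=
        h1 ▸ Set.mem_insert _ _
      obtain ⟨m, hm⟩ := Set.mem_iUnion.mp (hall hex.choose hs0 hs1)
      exact absurd
        (incon_of_mem_neg (lseq_mono Γ e (le_max_right (k+1) m) hm)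
          (lseq_mono Γ e (le_max_left (k+1) m) hw))
        (lseq_cons hΓ e (max (k+1) m))
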